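/- arXiv:math/0501198 — 2 statements merged into one kernel-verified Lean document; each statement's English description precedes it below -/
import Mathlib

section
/- Let K be a number field of degree d over ℚ, and let W ⊆ K be a ℚ-linear subspace with dim_ℚ(W) > d/2. If S ⊆ K is a set spanning W over ℚ, then the set of products {αβ : α, β ∈ S} spans K over ℚ. -/
open NumberField Pointwise

/-- If `W` is a `ℚ`-subspace of a number field `K` with `dim W > d/2` and `S` spans `W`,
then the set of products of two elements of `S` spans `K` over `ℚ`. -/
theorem span_mul_self_eq_top (K : Type) [Field K] [NumberField K]
    (W : Submodule ℚ K) (hW : Module.finrank ℚ K < 2 * Module.finrank ℚ W)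
    (S : Set K) (hS : Submodule.span ℚ S = W) :
    Submodule.span ℚ (S * S) = ⊤ := by
  by_contra h
  set B : LinearMap.BilinForm ℚ K := Algebra.traceForm ℚ K with hB
  have hnd : B.Nondegenerate := traceForm_nondegenerate ℚ K
  have hsymm : B.IsSymm := Algebra.traceForm_isSymm ℚ
  have hrefl : B.IsRefl := hsymm.isRefl
  set V : Submodule ℚ K := Submodule.span ℚ (S * S) with hV
  -- V ≠ ⊤, so its orthogonal complement is nontrivial
  have hVlt : Module.finrank ℚ V < Module.finrank ℚ K := by
    have hle := Submodule.finrank_le V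
    rcases lt_or_eq_of_le hle with h' | h'
    · exact h'
    · exact absurd (Submodule.eq_top_of_finrank_eq h') h
  have horth : Module.finrank ℚ (B.orthogonal V) =
      Module.finrank ℚ K - Module.finrank ℚ V :=
    LinearMap.BilinForm.finrank_orthogonal hnd V
  have hpos : 0 < Module.finrank ℚ (B.orthogonal V) := by omega
  obtain ⟨z, hzmem, hz⟩ : ∃ z ∈ B.orthogonal V, z ≠ 0 := by
    have : B.orthogonal V ≠ ⊥ := by
      intro hbot
      rw [hbot, finrank_bot] at hpos
      exact lt_irrefl 0 hpos
    exact Submodule.exists_mem_ne_zero_of_ne_bot this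
  -- multiplication by z is a linear equivalence
  have hbij : Function.Bijective (LinearMap.mulLeft ℚ z) := by
    constructor
    · intro a b hab
      exact mul_left_cancel₀ hz hab
    · intro y
      exact ⟨z⁻¹ * y, by simp [mul_assoc, hz, mul_inv_cancel₀]⟩
  let e : K ≃ₗ[ℚ] K := LinearEquiv.ofBijective (LinearMap.mulLeft ℚ z) hbij
  set zW : Submodule ℚ K := W.map (e : K →ₗ[ℚ] K) with hzW
  have hzWrank : Module.finrank ℚ zW = Module.finrank ℚ W :=
    LinearEquiv.finrank_map_eq e W
  -- W is orthogonal to zW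
  have hWle : W ≤ B.orthogonal zW := by
    intro w hw
    rw [LinearMap.BilinForm.mem_orthogonal_iff]
    rintro n ⟨w', hw', rfl⟩
    have hprod : w' * w ∈ V := by
      have : w' * w ∈ W * W := Submodule.mul_mem_mul hw' hw
      rwa [← hS, Submodule.span_mul_span] at this
    have : B (w' * w) z = 0 := hzmem (w' * w) hprod
    have hsz : B z (w' * w) = 0 := by
      have h2 := hsymm.eq z (w' * w)
      rw [h2]; exact this
    show B (e w') w = 0
    have he : e w' = z * w' := rfl
    rw [he]
    calc B (z * w') w = Algebra.trace ℚ K (z * w' * w) := rfl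
      _ = B z (w' * w) := by rw [mul_assoc]; rfl
      _ = 0 := hsz
  have hle := Submodule.finrank_mono hWle
  have horth2 : Module.finrank ℚ (B.orthogonal zW) =
      Module.finrank ℚ K - Module.finrank ℚ zW :=
    LinearMap.BilinForm.finrank_orthogonal hnd zW
  rw [horth2, hzWrank] at hle
  have := Submodule.finrank_le W
  omega
end

section
/- Let K be a number field of degree d ≥ 200, let r be an integer with d/2 < r, and suppose Λ = ℤγ₁ + … + ℤγ_r where γ₁,…,γ_r ∈ O_K are ℤ-linearly independent. Let W = ℚ-span of Λ, so dim_ℚ W = r. Let s, l be positive integers with binom(l+s,s) ≥ r and let S ⊆ S(l) have size r. Then there exists y = (y₁,…,y_s) ∈ W^s such that the r elements {y₁^{k₁}·…·y_s^{k_s} : (k₁,…,k_s) ∈ S} are ℚ-linearly independent in K. -/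
theorem exists_points_det_ne_zero {F ι : Type*} [Field F] :
    ∀ {r : ℕ} (w : Fin r → ι → F), LinearIndependent F w →
      ∃ j : Fin r → ι, (Matrix.of fun a b => w b (j a)).det ≠ 0 := by
  intro r
  induction r with
  | zero => intro w _; exact ⟨Fin.elim0, by simp [Matrix.det_fin_zero]⟩
  | succ n ih =>
    intro w hw
    obtain ⟨j0, hj0⟩ := ih (w ∘ Fin.castSucc) (hw.comp _ (Fin.castSucc_injective n))
    -- cofactors along the last row (independent of the chosen last point)
    set c : Fin (n + 1) → F := fun b =>
      (-1 : F) ^ ((n : ℕ) + (b : ℕ)) *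
        (Matrix.of fun a' b' : Fin n => w (b.succAbove b') (j0 a')).det with hc
    have hclast : c (Fin.last n) ≠ 0 := by
      have : (Matrix.of fun a' b' : Fin n => w ((Fin.last n).succAbove b') (j0 a')) =
          Matrix.of fun a b => (w ∘ Fin.castSucc) b (j0 a) := by
        ext a b; simp [Fin.succAbove_last]
      simp only [hc, Fin.val_last, this]
      rw [← two_mul, pow_mul, neg_one_sq, one_pow, one_mul]
      exact hj0
    -- the function x ↦ det of the extended matrix is a nontrivial combination of the `w b`
    have hfun : (∑ b, c b • w b) ≠ 0 := by
      intro h0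
      exact hclast (Fintype.linearIndependent_iff.mp hw c h0 (Fin.last n))
    obtain ⟨x, hx⟩ : ∃ x, (∑ b, c b • w b) x ≠ 0 := by
      by_contra h; push_neg at h
      exact hfun (funext fun x => by simpa using h x)
    set j : Fin (n + 1) → ι := Fin.snoc j0 x with hj
    refine ⟨j, ?_⟩
    rw [Matrix.det_succ_row _ (Fin.last n)]
    have : ∀ b : Fin (n + 1),
        (-1 : F) ^ ((Fin.last n : ℕ) + (b : ℕ)) *
          (Matrix.of fun a b' => w b' (j a)) (Fin.last n) b *
          ((Matrix.of fun a b' => w b' (j a)).submatrix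
            (Fin.last n).succAbove b.succAbove).det = c b * w b x := by
      intro b
      have hsub : (Matrix.of fun a b' => w b' (j a)).submatrix
          (Fin.last n).succAbove b.succAbove =
          Matrix.of fun a' b' : Fin n => w (b.succAbove b') (j0 a') := by
        ext a' b'
        simp [hj, Fin.succAbove_last, Fin.snoc_castSucc]
      rw [hsub]
      simp only [Matrix.of_apply, hj, Fin.snoc_last, hc, Fin.val_last]
      ring
    rw [Finset.sum_congr rfl fun b _ => this b]
    simpa using hx

/-- If some evaluation matrix is nonsingular, the family of functions is linearly
independent. -/
theorem li_of_points_det_ne_zero {F ι : Type*} [Field F] {r : ℕ}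
    (w : Fin r → ι → F) (j : Fin r → ι)
    (h : (Matrix.of fun a b => w b (j a)).det ≠ 0) : LinearIndependent F w := by
  classical
  rw [Fintype.linearIndependent_iff]
  intro g hg
  by_contra hne
  push_neg at hne
  obtain ⟨b0, hb0⟩ := hne
  apply h
  rw [← Matrix.exists_mulVec_eq_zero_iff]
  refine ⟨g, fun h0 => hb0 (congrFun h0 b0), ?_⟩
  funext a
  have := congrFun hg (j a)
  simpa [Matrix.mulVec, dotProduct, mul_comm] using this

/-- ℚ-linearly independent rational-valued functions stay independent over ℂ after
coercion. -/
theorem li_cast_complex {ι : Type*} {r : ℕ} (w : Fin r → ι → ℚ)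
    (h : LinearIndependent ℚ w) :
    LinearIndependent ℂ (fun b => fun k => ((w b k : ℚ) : ℂ)) := by
  obtain ⟨j, hj⟩ := exists_points_det_ne_zero w h
  apply li_of_points_det_ne_zero _ j
  have : (Matrix.of fun a b => ((w b (j a) : ℚ) : ℂ)) =
      (Matrix.of fun a b => w b (j a)).map (Rat.castHom ℂ) := by
    ext a b; simp
  rw [this]
  have hdet := (Rat.castHom ℂ).map_det (Matrix.of fun a b => w b (j a))
  rw [RingHom.mapMatrix_apply] at hdet
  rw [← hdet]
  simpa using hj
open NumberField in
/-- Images under all complex embeddings of ℚ-linearly independent elements of a number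
field are ℂ-linearly independent (via Dedekind's independence of characters). -/
theorem emb_linearIndependent (K : Type*) [Field K] [NumberField K] {r : ℕ}
    (γ : Fin r → K) (hγ : LinearIndependent ℚ γ) :
    LinearIndependent ℂ (fun b => fun σ : K →+* ℂ => σ (γ b)) := by
  classical
  set d := Module.finrank ℚ K with hdd
  let bK : Module.Basis (Fin d) ℚ K := Module.finBasis ℚ K
  -- embeddings are ℚ-linear
  have hsmul : ∀ (σ : K →+* ℂ) (q : ℚ) (v : K), σ (q • v) = (q : ℂ) * σ v := by
    intro σ q v
    rw [Rat.smul_def, map_mul, map_ratCast]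
  have hexp : ∀ (σ : K →+* ℂ) (x : K), σ x = ∑ k, (bK.repr x k : ℂ) * σ (bK k) := by
    intro σ x
    conv_lhs => rw [← bK.sum_repr x]
    rw [map_sum]
    exact Finset.sum_congr rfl fun k _ => hsmul σ _ _
  -- the square matrix of the embeddings against a ℚ-basis is invertible
  have hcard : Fintype.card (K →+* ℂ) = d := Embeddings.card K ℂ
  let eσ : Fin d ≃ (K →+* ℂ) := (Fintype.equivFinOfCardEq hcard).symm
  set B : Matrix (Fin d) (Fin d) ℂ := Matrix.of fun a k => (eσ a) (bK k) with hB
  have hrows : LinearIndependent ℂ (fun a => fun k => B a k) := by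
    rw [Fintype.linearIndependent_iff]
    intro t ht
    have hchar : LinearIndependent ℂ (fun σ : K →+* ℂ => (σ : K → ℂ)) :=
      (linearIndependent_monoidHom K ℂ).comp (fun σ : K →+* ℂ => (σ : K →* ℂ))
        (fun σ τ h => RingHom.coe_monoidHom_injective h)
    have hz : (∑ σ : K →+* ℂ, t (eσ.symm σ) • (σ : K → ℂ)) = 0 := by
      funext x
      have : ∀ σ : K →+* ℂ, t (eσ.symm σ) • σ x =
          ∑ k, (bK.repr x k : ℂ) * (t (eσ.symm σ) * σ (bK k)) := by
        intro σ
        rw [hexp σ x, smul_eq_mul, Finset.mul_sum]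
        exact Finset.sum_congr rfl fun k _ => by ring
      simp only [Pi.zero_apply, Finset.sum_apply, Pi.smul_apply]
      rw [Finset.sum_congr rfl fun σ _ => this σ, Finset.sum_comm]
      rw [Finset.sum_eq_zero]
      intro k _
      rw [← Finset.mul_sum]
      have := congrFun ht k
      simp only [Finset.sum_apply, Pi.smul_apply, Pi.zero_apply, smul_eq_mul] at this
      rw [← Equiv.sum_comp eσ (fun σ => t (eσ.symm σ) * σ (bK k))]
      simp only [Equiv.symm_apply_apply]
      rw [show ∑ a, t a * (eσ a) (bK k) = 0 from this]
      ring
    intro a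
    have := Fintype.linearIndependent_iff.mp hchar (fun σ => t (eσ.symm σ)) hz (eσ a)
    simpa using this
  have hdetB : B.det ≠ 0 := by
    rw [ne_eq, ← Matrix.exists_vecMul_eq_zero_iff]
    rintro ⟨v, hv, hvB⟩
    apply hv
    have := Fintype.linearIndependent_iff.mp hrows v ?_
    · funext a; exact this a
    · funext k
      have := congrFun hvB k
      simpa [Matrix.vecMul, dotProduct] using this
  -- now conclude
  rw [Fintype.linearIndependent_iff]
  intro g hg
  -- coordinate vectors of the γ's, cast to ℂ
  have hcoord : LinearIndependent ℂ (fun b => fun k : Fin d => ((bK.repr (γ b) k : ℚ) : ℂ)) := by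
    apply li_cast_complex
    have : LinearIndependent ℚ (fun b => bK.repr (γ b)) :=
      (LinearIndependent.map' hγ (bK.repr : K →ₗ[ℚ] (Fin d →₀ ℚ)) (by simp [LinearEquiv.ker]))
    have h2 : LinearIndependent ℚ (fun b => ((bK.repr (γ b) : Fin d →₀ ℚ) : Fin d → ℚ)) := by
      apply this.map' (Finsupp.lcoeFun) ?_
      rw [Submodule.eq_bot_iff]
      intro x hx
      ext k
      have := congrFun (show (x : Fin d → ℚ) = 0 by simpa [Finsupp.lcoeFun] using hx) k
      simpa using this
    exact h2
  have key : ∀ k, ∑ b, g b * (bK.repr (γ b) k : ℂ) = 0 := by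
    -- B.mulVec avec = 0 where avec k = Σ_b g b * coords
    set avec : Fin d → ℂ := fun k => ∑ b, g b * (bK.repr (γ b) k : ℂ) with ha
    have hmv : B.mulVec avec = 0 := by
      funext a
      have hga := congrFun hg (eσ a)
      simp only [Finset.sum_apply, Pi.smul_apply, smul_eq_mul, Pi.zero_apply] at hga
      simp only [Matrix.mulVec, dotProduct, hB, Matrix.of_apply, ha, Pi.zero_apply]
      calc ∑ k, (eσ a) (bK k) * ∑ b, g b * (bK.repr (γ b) k : ℂ)
          = ∑ b, g b * ∑ k, (bK.repr (γ b) k : ℂ) * (eσ a) (bK k) := by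
            simp_rw [Finset.mul_sum]
            rw [Finset.sum_comm]
            refine Finset.sum_congr rfl fun b _ => Finset.sum_congr rfl fun k _ => by ring
        _ = ∑ b, g b * (eσ a) (γ b) := by
            refine Finset.sum_congr rfl fun b _ => ?_
            rw [← hexp]
        _ = 0 := hga
    have : avec = 0 := by
      by_contra hne
      exact hdetB (Matrix.exists_mulVec_eq_zero_iff.mp ⟨avec, hne, hmv⟩)
    intro k; exact congrFun this k
  have := Fintype.linearIndependent_iff.mp hcoord g ?_
  · exact this
  · funext k
    have := key k
    simpa using this
/-- Distinct monomial functions on `ℚ^s` are `ℚ`-linearly independent. -/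
theorem monomial_fns_linearIndependent {s r : ℕ} (v : Fin r → (Fin s → ℕ))
    (hv : Function.Injective v) :
    LinearIndependent ℚ (fun b => fun x : Fin s → ℚ => ∏ i, x i ^ v b i) := by
  classical
  rw [Fintype.linearIndependent_iff]
  intro g hg
  set m : Fin r → (Fin s →₀ ℕ) := fun b => Finsupp.equivFunOnFinite.symm (v b) with hm
  have hminj : Function.Injective m :=
    fun a b h => hv (Finsupp.equivFunOnFinite.symm.injective h)
  set P : MvPolynomial (Fin s) ℚ := ∑ b, MvPolynomial.monomial (m b) (g b) with hP
  have hevalP : ∀ x : Fin s → ℚ, MvPolynomial.eval x P = ∑ b, g b * ∏ i, x i ^ v b i := by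
    intro x
    rw [hP, map_sum]
    refine Finset.sum_congr rfl fun b _ => ?_
    rw [MvPolynomial.eval_monomial, Finsupp.prod_fintype _ _ (fun i => pow_zero (x i))]
    congr 1
  have hP0 : P = 0 := by
    apply MvPolynomial.funext
    intro x
    rw [hevalP x, map_zero]
    have := congrFun hg x
    simpa using this
  intro b0
  have := congrArg (MvPolynomial.coeff (m b0)) hP0
  rw [hP, MvPolynomial.coeff_sum, MvPolynomial.coeff_zero] at this
  rw [Finset.sum_eq_single b0 (fun b _ hb => by
    rw [MvPolynomial.coeff_monomial, if_neg (fun h => hb (hminj h))]) (by simp)] at this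
  simpa [MvPolynomial.coeff_monomial] using this

/-- A nonzero polynomial with complex coefficients does not vanish at all rational
points. -/
theorem exists_rat_point_ne_zero {n : Type*} (F : MvPolynomial n ℂ) (hF : F ≠ 0) :
    ∃ x : n → ℚ, MvPolynomial.eval (fun i => ((x i : ℚ) : ℂ)) F ≠ 0 := by
  classical
  by_contra h
  push_neg at h
  obtain ⟨m0, hm0⟩ := MvPolynomial.ne_zero_iff.mp hF
  obtain ⟨φ, hφ⟩ : ∃ φ : Module.Dual ℚ ℂ, φ (MvPolynomial.coeff m0 F) ≠ 0 := by
    by_contra hc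
    push_neg at hc
    exact hm0 ((Module.forall_dual_apply_eq_zero_iff ℚ _).mp hc)
  set G : MvPolynomial n ℚ :=
    ∑ m ∈ F.support, MvPolynomial.monomial m (φ (MvPolynomial.coeff m F)) with hG
  have hGeval : ∀ x : n → ℚ, MvPolynomial.eval x G =
      φ (MvPolynomial.eval (fun i => ((x i : ℚ) : ℂ)) F) := by
    intro x
    rw [hG, map_sum, MvPolynomial.eval_eq (fun i => ((x i : ℚ) : ℂ)) F, map_sum]
    refine Finset.sum_congr rfl fun m _ => ?_
    rw [MvPolynomial.eval_monomial]
    have hcast : (∏ i ∈ m.support, ((x i : ℚ) : ℂ) ^ m i) =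
        (((∏ i ∈ m.support, x i ^ m i : ℚ) : ℚ) : ℂ) := by push_cast; ring
    rw [hcast]
    have : MvPolynomial.coeff m F * ((∏ i ∈ m.support, x i ^ m i : ℚ) : ℂ) =
        (∏ i ∈ m.support, x i ^ m i : ℚ) • MvPolynomial.coeff m F := by
      rw [Rat.smul_def]; ring
    rw [this, map_smul, smul_eq_mul]
    rw [Finsupp.prod]
    ring
  have hG0 : G = 0 := by
    apply MvPolynomial.funext
    intro x
    rw [hGeval x, h x, map_zero, map_zero]
  have : MvPolynomial.coeff m0 G = φ (MvPolynomial.coeff m0 F) := by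
    rw [hG, MvPolynomial.coeff_sum]
    rw [Finset.sum_eq_single m0 (fun m _ hm => by
      rw [MvPolynomial.coeff_monomial, if_neg (fun hh => hm hh)])
      (fun hm => absurd (MvPolynomial.mem_support_iff.mpr hm0) hm)]
    simp [MvPolynomial.coeff_monomial]
  rw [hG0, MvPolynomial.coeff_zero] at this
  exact hφ this.symm
open NumberField

/-- Ellenberg–Venkatesh dimension counting: given a rank-`r` lattice `Λ = ℤγ₁ + ⋯ + ℤγ_r`
in `𝓞 K` with `r > d/2`, and a set `S` of `r` exponent vectors in `S(l)`, there is
`y ∈ (spanℚ Λ)^s` whose monomials indexed by `S` are `ℚ`-linearly independent. -/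
theorem exists_tuple_monomials_linearIndependent (K : Type) [Field K] [NumberField K]
    (d r s l : ℕ) (hd : d = Module.finrank ℚ K) (hd200 : 200 ≤ d) (hr : d < 2 * r)
    (γ : Fin r → 𝓞 K) (hγ : LinearIndependent ℤ γ)
    (hs : 0 < s) (hl : 0 < l) (hbin : r ≤ (l + s).choose s)
    (S : Finset (Fin s → ℕ)) (hScard : S.card = r) (hSl : ∀ v ∈ S, ∑ i, v i ≤ l) :
    ∃ y : Fin s → K,
      (∀ i, y i ∈ Submodule.span ℚ (Set.range fun j => (γ j : K))) ∧
      LinearIndependent ℚ (fun v : {v // v ∈ S} => ∏ i, (y i) ^ (v.1 i)) := by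
  classical
  set γK : Fin r → K := fun b => (γ b : K) with hγK
  -- γK is ℚ-linearly independent
  have hγK_int : LinearIndependent ℤ γK := by
    have : γK = (algebraMap (𝓞 K) K).toAddMonoidHom.toIntLinearMap ∘ γ := rfl
    rw [this]
    apply hγ.map' _ ?_
    rw [LinearMap.ker_eq_bot]
    exact RingOfIntegers.coe_injective
  have hγKQ : LinearIndependent ℚ γK :=
    (LinearIndependent.iff_fractionRing (R := ℤ) (K := ℚ)).mp hγK_int
  -- an enumeration of S
  set q : Fin r ≃ {v // v ∈ S} := (S.equivFinOfCardEq hScard).symm with hq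
  set v : Fin r → (Fin s → ℕ) := fun b => (q b : Fin s → ℕ) with hv
  have hvinj : Function.Injective v := fun a b h => q.injective (Subtype.ext h)
  -- rational points making the monomial evaluation matrix nonsingular
  obtain ⟨p, hp⟩ := exists_points_det_ne_zero
    (fun b => fun x : Fin s → ℚ => ∏ i, x i ^ v b i) (monomial_fns_linearIndependent v hvinj)
  -- embeddings making the matrix of the γ's nonsingular
  obtain ⟨j, hj⟩ := exists_points_det_ne_zero
    (fun b => fun σ : K →+* ℂ => σ (γK b)) (emb_linearIndependent K γK hγKQ)
  set G : Matrix (Fin r) (Fin r) ℂ := Matrix.of fun a b => (j a) (γK b) with hG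
  have hGdet : G.det ≠ 0 := hj
  have hGunit : IsUnit G.det := Ne.isUnit hGdet
  -- a complex point where the generic determinant does not vanish
  set cstar : Fin s × Fin r → ℂ :=
    fun ik => G⁻¹.mulVec (fun a => ((p a ik.1 : ℚ) : ℂ)) ik.2 with hcstar
  have hsolve : ∀ (i : Fin s) (a : Fin r), (∑ k, cstar (i, k) * (j a) (γK k)) = (p a i : ℂ) := by
    intro i a
    have : G.mulVec (G⁻¹.mulVec (fun a => ((p a i : ℚ) : ℂ))) = fun a => ((p a i : ℚ) : ℂ) := by
      rw [Matrix.mulVec_mulVec, Matrix.mul_nonsing_inv _ hGunit, Matrix.one_mulVec]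
    have := congrFun this a
    rw [Matrix.mulVec, dotProduct] at this
    simpa [hcstar, hG, mul_comm] using this
  -- the generic matrix of monomials, as polynomials in the coordinates
  set Pmat : Matrix (Fin r) (Fin r) (MvPolynomial (Fin s × Fin r) ℂ) :=
    Matrix.of fun a b => ∏ i, (∑ k, MvPolynomial.X (i, k) *
      MvPolynomial.C ((j a) (γK k))) ^ v b i with hPmat
  set F : MvPolynomial (Fin s × Fin r) ℂ := Pmat.det with hF
  have hevalF : ∀ c : Fin s × Fin r → ℂ, MvPolynomial.eval c F =
      (Matrix.of fun a b => (∏ i, (∑ k, c (i, k) * (j a) (γK k)) ^ v b i :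
        ℂ)).det := by
    intro c
    rw [hF, (MvPolynomial.eval c).map_det]
    congr 1
    ext a b
    simp [hPmat, RingHom.mapMatrix_apply]
  have hFne : F ≠ 0 := by
    intro h0
    have := hevalF cstar
    rw [h0, map_zero] at this
    have hmat : (Matrix.of fun a b => (∏ i, (∑ k, cstar (i, k) * (j a) (γK k)) ^ v b i : ℂ)) =
        (Matrix.of fun a b => (∏ i, p a i ^ v b i : ℚ)).map (Rat.castHom ℂ) := by
      ext a b
      simp only [Matrix.map_apply, Matrix.of_apply, map_prod, map_pow]
      refine Finset.prod_congr rfl fun i _ => ?_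
      rw [hsolve i a]
      rfl
    rw [hmat] at this
    have hdet := (Rat.castHom ℂ).map_det (Matrix.of fun a b => (∏ i, p a i ^ v b i : ℚ))
    rw [RingHom.mapMatrix_apply] at hdet
    rw [← hdet] at this
    apply hp
    have h2 : ((Matrix.of fun a b => (∏ i, p a i ^ v b i : ℚ)).det : ℂ) = 0 := this.symm
    exact_mod_cast h2
  -- a rational point where the determinant does not vanish
  obtain ⟨x, hx⟩ := exists_rat_point_ne_zero F hFne
  -- the desired tuple
  refine ⟨fun i => ∑ k, x (i, k) • γK k, ?_, ?_⟩
  · intro i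
    exact Submodule.sum_mem _ fun k _ =>
      Submodule.smul_mem _ _ (Submodule.subset_span ⟨k, rfl⟩)
  · set y : Fin s → K := fun i => ∑ k, x (i, k) • γK k with hy
    rw [← linearIndependent_equiv q]
    have hsmul : ∀ (σ : K →+* ℂ) (qq : ℚ) (w : K), σ (qq • w) = (qq : ℂ) * σ w := by
      intro σ qq w
      rw [Rat.smul_def, map_mul, map_ratCast]
    have hσy : ∀ (a : Fin r) (i : Fin s), (j a) (y i) = ∑ k, (x (i, k) : ℂ) * (j a) (γK k) := by
      intro a i
      rw [hy, map_sum]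
      exact Finset.sum_congr rfl fun k _ => hsmul _ _ _
    -- the evaluated matrix
    set N : Matrix (Fin r) (Fin r) ℂ :=
      Matrix.of fun a b => (∏ i, (∑ k, (x (i, k) : ℂ) * (j a) (γK k)) ^ v b i) with hN
    have hNdet : N.det ≠ 0 := by
      have := hevalF (fun ik => (x ik : ℂ))
      rw [hN]; rw [← this]; exact hx
    rw [Fintype.linearIndependent_iff]
    intro g hg
    have hg' : (∑ b, g b • ∏ i, y i ^ v b i) = 0 := hg
    have hmv : N.mulVec (fun b => (g b : ℂ)) = 0 := by
      funext a
      have hcalc : (0 : ℂ) = ∑ b, (g b : ℂ) * N a b := by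
        calc (0 : ℂ) = (j a) (∑ b, g b • ∏ i, y i ^ v b i) := by rw [hg', map_zero]
          _ = ∑ b, (g b : ℂ) * (j a) (∏ i, y i ^ v b i) := by
              rw [map_sum]
              exact Finset.sum_congr rfl fun b _ => hsmul _ _ _
          _ = ∑ b, (g b : ℂ) * N a b := by
              refine Finset.sum_congr rfl fun b _ => ?_
              congr 1
              rw [map_prod, hN]
              refine Finset.prod_congr rfl fun i _ => ?_
              rw [map_pow, hσy]
      simpa [Matrix.mulVec, dotProduct, mul_comm] using hcalc.symm
    have hzero : (fun b => (g b : ℂ)) = 0 := by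
      by_contra hne
      exact hNdet (Matrix.exists_mulVec_eq_zero_iff.mp ⟨_, hne, hmv⟩)
    intro b
    have := congrFun hzero b
    simpa using this
end
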